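/- For any nonzero real μ and positive constant c, the function E₁(x, μ) = s(x, μ) + μ²x²/2 (with s(x, μ) = μ² ln(exp(x/μ²) + exp(-x/μ²))) has ∂E₁/∂μ = (2/μ)(s(x,μ) − α(x,μ)·x) + μ·x², where α(x,μ) = tanh(x/μ²), and this partial derivative is nonzero whenever μ ≠ 0. -/

import Mathlib

lemma key_ineq (t : ℝ) :
    t * ((Real.exp (2*t) - 1) / (Real.exp (2*t) + 1)) < Real.log (Real.exp t + Real.exp (-t)) := by
  wlog ht : 0 ≤ t with H
  · push_neg at ht
    have h := H (-t) (by linarith)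
    have e1 : (Real.exp (2*(-t)) - 1) / (Real.exp (2*(-t)) + 1)
        = -((Real.exp (2*t) - 1) / (Real.exp (2*t) + 1)) := by
      rw [show 2*(-t) = -(2*t) by ring, Real.exp_neg]
      set E := Real.exp (2*t) with hEd
      have hE0 : 0 < E := Real.exp_pos _
      rw [div_eq_iff (by positivity : E⁻¹ + 1 ≠ 0), neg_mul]
      field_simp
      ring
    rw [e1] at h
    simp only [neg_neg] at h
    have e2 : -t * -((Real.exp (2*t) - 1) / (Real.exp (2*t) + 1))
        = t * ((Real.exp (2*t) - 1) / (Real.exp (2*t) + 1)) := by ring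
    rw [e2] at h
    rw [add_comm (Real.exp (-t))] at h
    exact h
  · have hE : Real.exp t < Real.exp t + Real.exp (-t) := by
      linarith [Real.exp_pos (-t)]
    have hlog : t < Real.log (Real.exp t + Real.exp (-t)) := by
      calc t = Real.log (Real.exp t) := (Real.log_exp t).symm
        _ < _ := Real.log_lt_log (Real.exp_pos t) hE
    have hfrac : (Real.exp (2*t) - 1) / (Real.exp (2*t) + 1) < 1 := by
      rw [div_lt_one (by positivity)]; linarith
    have hfm : t * ((Real.exp (2*t) - 1) / (Real.exp (2*t) + 1)) ≤ t * 1 :=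
      mul_le_mul_of_nonneg_left hfrac.le ht
    linarith

theorem energy_deriv_mu_nonzero (x μ : ℝ) (hμ : μ ≠ 0) :
    HasDerivAt (fun m : ℝ =>
        m^2 * Real.log (Real.exp (x / m^2) + Real.exp (-x / m^2)) + m^2 * x^2 / 2)
      ((2 / μ) * (μ^2 * Real.log (Real.exp (x / μ^2) + Real.exp (-x / μ^2)) -
        (Real.exp (2 * x / μ^2) - 1) / (Real.exp (2 * x / μ^2) + 1) * x) + μ * x^2) μ ∧
    (2 / μ) * (μ^2 * Real.log (Real.exp (x / μ^2) + Real.exp (-x / μ^2)) -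
        (Real.exp (2 * x / μ^2) - 1) / (Real.exp (2 * x / μ^2) + 1) * x) + μ * x^2 ≠ 0 := by
  have hμ2 : (μ:ℝ)^2 ≠ 0 := pow_ne_zero 2 hμ
  have hE : (0:ℝ) < Real.exp (x/μ^2) := Real.exp_pos _
  have hF : (0:ℝ) < Real.exp (-x/μ^2) := Real.exp_pos _
  have hsum : Real.exp (x/μ^2) + Real.exp (-x/μ^2) ≠ 0 := by positivity
  have hP : 0 < μ^2 * Real.log (Real.exp (x / μ^2) + Real.exp (-x / μ^2)) -
      (Real.exp (2 * x / μ^2) - 1) / (Real.exp (2 * x / μ^2) + 1) * x := by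
    have hk := key_ineq (x / μ^2)
    have h2t : 2 * (x/μ^2) = 2 * x / μ^2 := by ring
    have hneg' : -(x/μ^2) = -x/μ^2 := by ring
    rw [h2t, hneg'] at hk
    have hmul := mul_lt_mul_of_pos_left hk (show (0:ℝ) < μ^2 by positivity)
    have heq : (Real.exp (2 * x / μ^2) - 1) / (Real.exp (2 * x / μ^2) + 1) * x
        = μ^2 * ((x/μ^2) * ((Real.exp (2*x/μ^2) - 1) / (Real.exp (2*x/μ^2) + 1))) := by
      field_simp
    rw [← heq] at hmul
    linarith
  constructor
  · have h1 : HasDerivAt (fun m : ℝ => m^2) (2*μ) μ := by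
      simpa using hasDerivAt_pow 2 μ
    have h2 : HasDerivAt (fun m : ℝ => x / m^2) ((0 * μ^2 - x * (2*μ)) / (μ^2)^2) μ :=
      (hasDerivAt_const μ x).div h1 hμ2
    have h2' : HasDerivAt (fun m : ℝ => -x / m^2) ((0 * μ^2 - (-x) * (2*μ)) / (μ^2)^2) μ :=
      (hasDerivAt_const μ (-x)).div h1 hμ2
    have h4 := ((h2.exp).add (h2'.exp)).log hsum
    have h7 := (h1.mul h4).add ((h1.mul_const (x^2)).div_const 2)
    convert h7 using 1
    case e'_4 => rfl
    case e'_5 => rfl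
    case e'_8 => rfl
    simp only [Pi.add_apply]
    have hexp2 : Real.exp (2 * x / μ^2) = Real.exp (x/μ^2) * Real.exp (x/μ^2) := by
      rw [← Real.exp_add]; ring_nf
    have hexpneg : Real.exp (-x/μ^2) = (Real.exp (x/μ^2))⁻¹ := by
      rw [← Real.exp_neg]; ring_nf
    set L := Real.log (Real.exp (x/μ^2) + Real.exp (-x/μ^2)) with hLdef
    rw [hexp2]
    rw [hexpneg] at hsum ⊢
    set E := Real.exp (x/μ^2) with hEdef
    field_simp
    ring
  · rcases lt_or_gt_of_ne hμ with hneg | hpos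
    · have hlt : (2 / μ) * (μ^2 * Real.log (Real.exp (x / μ^2) + Real.exp (-x / μ^2)) -
          (Real.exp (2 * x / μ^2) - 1) / (Real.exp (2 * x / μ^2) + 1) * x) + μ * x^2 < 0 := by
        have h1 : (2/μ) * (μ^2 * Real.log (Real.exp (x / μ^2) + Real.exp (-x / μ^2)) -
            (Real.exp (2 * x / μ^2) - 1) / (Real.exp (2 * x / μ^2) + 1) * x) < 0 :=
          mul_neg_of_neg_of_pos (by exact div_neg_of_pos_of_neg two_pos hneg) hP
        nlinarith [sq_nonneg x]
      exact ne_of_lt hlt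
    · have hgt : 0 < (2 / μ) * (μ^2 * Real.log (Real.exp (x / μ^2) + Real.exp (-x / μ^2)) -
          (Real.exp (2 * x / μ^2) - 1) / (Real.exp (2 * x / μ^2) + 1) * x) + μ * x^2 := by
        have h1 : 0 < (2/μ) * (μ^2 * Real.log (Real.exp (x / μ^2) + Real.exp (-x / μ^2)) -
            (Real.exp (2 * x / μ^2) - 1) / (Real.exp (2 * x / μ^2) + 1) * x) :=
          mul_pos (by positivity) hP
        nlinarith [sq_nonneg x]
      exact hgt.ne'
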